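/- With P, S, T₁, T₂ as above, any point y in the interior of P not on S lies in exactly one of T₁, T₂, and any curve in the interior of P from a point of T₁ to a point of T₂ must intersect S. -/

import Mathlib

/-- A simple closed curve in the plane: the image of a continuous injection of the circle. -/
def IsSimpleClosedCurve (P : Set (ℝ × ℝ)) : Prop :=
  ∃ f : AddCircle (1 : ℝ) → ℝ × ℝ, Continuous f ∧ Function.Injective f ∧ Set.range f = P

/-- The interior of a simple closed curve: points of the complement whose connected
component in the complement is bounded. -/
def JordanInterior (P : Set (ℝ × ℝ)) : Set (ℝ × ℝ) :=
  {y | y ∉ P ∧ Bornology.IsBounded (connectedComponentIn Pᶜ y)}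

/-- The exterior of a simple closed curve: points of the complement whose connected
component in the complement is unbounded. -/
def JordanExterior (P : Set (ℝ × ℝ)) : Set (ℝ × ℝ) :=
  {y | y ∉ P ∧ ¬ Bornology.IsBounded (connectedComponentIn Pᶜ y)}

/-- A simple arc in the plane from `a` to `b` with image `γ`. -/
def IsArc (γ : Set (ℝ × ℝ)) (a b : ℝ × ℝ) : Prop :=
  ∃ f : ℝ → ℝ × ℝ, ContinuousOn f (Set.Icc 0 1) ∧ Set.InjOn f (Set.Icc 0 1) ∧
    f 0 = a ∧ f 1 = b ∧ γ = f '' Set.Icc 0 1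

/-- With `P` a simple closed curve, `S` a simple arc with endpoints on `P` and interior
in `int P`, and `T₁, T₂` the two components of `int P \ S`: every point of
`int P \ S` lies in exactly one of `T₁, T₂`, and every curve inside `int P` joining a
point of `T₁` to a point of `T₂` must meet `S`. -/
theorem jordan_arc_separation_crossing (P S : Set (ℝ × ℝ)) (p q : ℝ × ℝ)
    (hP : IsSimpleClosedCurve P) (hS : IsArc S p q) (hpq : p ≠ q)
    (hpP : p ∈ P) (hqP : q ∈ P) (hSP : S ∩ P = {p, q})
    (hSint : S \ {p, q} ⊆ JordanInterior P)
    (T₁ T₂ : Set (ℝ × ℝ)) (hT : T₁ ≠ T₂) (hT₁ : IsConnected T₁) (hT₂ : IsConnected T₂)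
    (hdisj : Disjoint T₁ T₂) (hunion : JordanInterior P \ S = T₁ ∪ T₂)
    (hcomp : ∀ y ∈ JordanInterior P \ S,
      connectedComponentIn (JordanInterior P \ S) y = T₁ ∨
      connectedComponentIn (JordanInterior P \ S) y = T₂) :
    (∀ y ∈ JordanInterior P \ S, (y ∈ T₁ ↔ y ∉ T₂)) ∧
    (∀ γ : ℝ → ℝ × ℝ, ContinuousOn γ (Set.Icc 0 1) →
      (∀ t ∈ Set.Icc (0 : ℝ) 1, γ t ∈ JordanInterior P) →
      γ 0 ∈ T₁ → γ 1 ∈ T₂ → ∃ t ∈ Set.Icc (0 : ℝ) 1, γ t ∈ S) := by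
  constructor
  · intro y hy
    have hy' : y ∈ T₁ ∪ T₂ := hunion ▸ hy
    constructor
    · intro h1 h2
      exact Set.disjoint_left.mp hdisj h1 h2
    · intro h2
      rcases hy' with h | h
      · exact h
      · exact absurd h h2
  · intro γ hcont hmem h0 h1
    by_contra h
    push_neg at h
    have hsub : Set.MapsTo γ (Set.Icc 0 1) (JordanInterior P \ S) := fun t ht =>
      ⟨hmem t ht, h t ht⟩
    have himg : IsConnected (γ '' Set.Icc 0 1) :=
      (isConnected_Icc (by norm_num)).image γ hcont
    have h0' : γ 0 ∈ JordanInterior P \ S := hsub (by norm_num : (0:ℝ) ∈ Set.Icc 0 1)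
    have hsubset : γ '' Set.Icc 0 1 ⊆ connectedComponentIn (JordanInterior P \ S) (γ 0) :=
      himg.isPreconnected.subset_connectedComponentIn
        ⟨0, by norm_num, rfl⟩ (Set.mapsTo_iff_image_subset.mp hsub)
    have h1mem : γ 1 ∈ connectedComponentIn (JordanInterior P \ S) (γ 0) :=
      hsubset ⟨1, by norm_num, rfl⟩
    have h0mem : γ 0 ∈ connectedComponentIn (JordanInterior P \ S) (γ 0) :=
      mem_connectedComponentIn h0'
    rcases hcomp (γ 0) h0' with hc | hc
    · rw [hc] at h1mem
      exact Set.disjoint_left.mp hdisj h1mem h1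
    · rw [hc] at h0mem
      exact Set.disjoint_left.mp hdisj h0 h0mem
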